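/- Let k be a complete non-Archimedean valued field with valuation ring k°, and let (E, ‖·‖) be a finite-dimensional normed k-vector space admitting an orthonormal basis (e_j)_{j=0}^r. Then any element s_0 ∈ E with ‖s_0‖ = 1 can be completed to an orthonormal basis (s_0, s_1, …, s_r) of (E, ‖·‖). -/

import Mathlib

private lemma iSup_comp_equiv_real {α β : Type*} [Nonempty α] [Finite α]
    (τ : β ≃ α) (f : α → ℝ) : ⨆ i, f (τ i) = ⨆ j, f j := by
  haveI : Nonempty β := ⟨τ.symm ‹Nonempty α›.some⟩
  haveI : Finite β := Finite.of_equiv α τ.symm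
  have hb : BddAbove (Set.range f) := (Set.finite_range f).bddAbove
  have hb' : BddAbove (Set.range fun i => f (τ i)) :=
    (Set.finite_range _).bddAbove
  refine le_antisymm (ciSup_le fun i => le_ciSup hb _) (ciSup_le fun j => ?_)
  simpa using le_ciSup hb' (τ.symm j)

/-- key ultrametric sup estimate -/
private lemma sup_aux {n : ℕ} {k : Type*} [NormedField k]
    (hk : ∀ x y : k, ‖x + y‖ ≤ max ‖x‖ ‖y‖)
    (v w : Fin (n + 1) → k) (hw : ∀ j, ‖w j‖ ≤ 1) (γ : k)
    (hγ : ‖γ‖ ≤ ⨆ j, ‖v j‖) :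
    (⨆ j, ‖v j + γ * w j‖) ≤ ⨆ j, ‖v j‖ := by
  have hb : BddAbove (Set.range fun j => ‖v j‖) := (Set.finite_range _).bddAbove
  refine ciSup_le fun j => ?_
  refine (hk _ _).trans (max_le (le_ciSup hb j) ?_)
  calc ‖γ * w j‖ = ‖γ‖ * ‖w j‖ := norm_mul _ _
    _ ≤ ‖γ‖ * 1 := by
        exact mul_le_mul_of_nonneg_left (hw j) (norm_nonneg _)
    _ = ‖γ‖ := mul_one _
    _ ≤ _ := hγ

theorem extend_unit_vector_to_orthonormal_basis
    {k E : Type*} [NormedField k] [CompleteSpace k]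
    (hk : ∀ x y : k, ‖x + y‖ ≤ max ‖x‖ ‖y‖)
    [AddCommGroup E] [Module k E]
    (N : E → ℝ) (r : ℕ) (e : Module.Basis (Fin (r + 1)) k E)
    (he : ∀ x : E, N x = ⨆ j, ‖e.repr x j‖)
    (s₀ : E) (hs₀ : N s₀ = 1) :
    ∃ b : Module.Basis (Fin (r + 1)) k E, b 0 = s₀ ∧ ∀ x : E, N x = ⨆ j, ‖b.repr x j‖ := by
  -- the sup of the coordinates of `s₀` equals 1, and it is attained at some `j₀`
  have hsup : (⨆ j, ‖e.repr s₀ j‖) = 1 := (he s₀) ▸ hs₀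
  obtain ⟨j₀, hj₀⟩ := Finite.exists_max (fun j => ‖e.repr s₀ j‖)
  have hbdd : BddAbove (Set.range fun j => ‖e.repr s₀ j‖) :=
    (Set.finite_range _).bddAbove
  have hj₀1 : ‖e.repr s₀ j₀‖ = 1 := by
    refine le_antisymm (hsup ▸ le_ciSup hbdd j₀) ?_
    rw [← hsup]
    exact ciSup_le fun j => hj₀ j
  -- swap coordinates `0` and `j₀`
  set σ : Fin (r + 1) ≃ Fin (r + 1) := Equiv.swap 0 j₀ with hσ
  set e' : Module.Basis (Fin (r + 1)) k E := e.reindex σ with he'def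
  have hrepr' : ∀ (x : E) (i : Fin (r + 1)), e'.repr x i = e.repr x (σ i) := by
    intro x i
    rw [he'def, Module.Basis.repr_reindex_apply, hσ, Equiv.symm_swap]
  have hNe' : ∀ x : E, N x = ⨆ j, ‖e'.repr x j‖ := by
    intro x
    rw [he x]
    have := iSup_comp_equiv_real σ (fun j => ‖e.repr x j‖)
    rw [← this]
    simp only [hrepr']
  -- notation
  set c : k := e'.repr s₀ 0 with hcdef
  have hc1 : ‖c‖ = 1 := by
    rw [hcdef, hrepr']
    simpa [hσ] using hj₀1
  have hc0 : c ≠ 0 := by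
    intro h; rw [h, norm_zero] at hc1; norm_num at hc1
  have hsup' : (⨆ j, ‖e'.repr s₀ j‖) = 1 := by rw [← hNe' s₀, hs₀]
  have hμle : ∀ j, ‖e'.repr s₀ j‖ ≤ 1 := by
    intro j
    rw [← hsup']
    exact le_ciSup ((Set.finite_range fun j => ‖e'.repr s₀ j‖).bddAbove) j
  set d : E := s₀ - e' 0 with hddef
  have hreprd : ∀ j, e'.repr d j = e'.repr s₀ j - (Finsupp.single (0 : Fin (r+1)) (1:k)) j := by
    intro j; rw [hddef, map_sub, Finsupp.sub_apply, e'.repr_self]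
  have hwd : ∀ j, ‖e'.repr d j‖ ≤ 1 := by
    intro j
    rw [hreprd j, sub_eq_add_neg]
    refine (hk _ _).trans (max_le (hμle j) ?_)
    rw [norm_neg]
    rcases eq_or_ne (0 : Fin (r+1)) j with h | h
    · simp [Finsupp.single_apply, h]
    · simp [Finsupp.single_apply, h]
  have hcoordd : e'.repr d 0 = c - 1 := by
    rw [hreprd 0, Finsupp.single_apply]; simp [hcdef]
  -- the shear linear maps
  set fwd : E →ₗ[k] E := LinearMap.id + LinearMap.smulRight (e'.coord 0) d with hfwd
  set inv : E →ₗ[k] E := LinearMap.id - c⁻¹ • LinearMap.smulRight (e'.coord 0) d with hinv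
  have hfwd_apply : ∀ x, fwd x = x + (e'.repr x 0) • d := by
    intro x; simp [hfwd, Module.Basis.coord_apply]
  have hinv_apply : ∀ x, inv x = x - (c⁻¹ * e'.repr x 0) • d := by
    intro x; simp [hinv, Module.Basis.coord_apply, smul_smul]
  have hcoord_lin : ∀ (x : E) (t : k), e'.repr (x + t • d) 0 = e'.repr x 0 + t * (c - 1) := by
    intro x t
    rw [map_add, map_smul, Finsupp.add_apply, Finsupp.smul_apply, hcoordd, smul_eq_mul]
  have hfi : ∀ x, fwd (inv x) = x := by
    intro x
    rw [hinv_apply x, sub_eq_add_neg, ← neg_smul, hfwd_apply, hcoord_lin]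
    have : e'.repr x 0 + -(c⁻¹ * e'.repr x 0) * (c - 1) = c⁻¹ * e'.repr x 0 := by
      field_simp; ring
    rw [this, add_assoc, ← add_smul]
    simp
  have hif : ∀ x, inv (fwd x) = x := by
    intro x
    rw [hfwd_apply x, hinv_apply, hcoord_lin]
    have : c⁻¹ * (e'.repr x 0 + e'.repr x 0 * (c - 1)) = e'.repr x 0 := by
      field_simp; ring
    rw [this]
    simp
  set φ : E ≃ₗ[k] E := LinearEquiv.ofLinear fwd inv
    (by ext x; exact hfi x) (by ext x; exact hif x) with hφ
  -- the sup of coordinates is preserved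
  have hrepr_add : ∀ (x : E) (t : k) (j), e'.repr (x + t • d) j = e'.repr x j + t * e'.repr d j := by
    intro x t j
    rw [map_add, map_smul, Finsupp.add_apply, Finsupp.smul_apply, smul_eq_mul]
  have hbddx : ∀ x : E, BddAbove (Set.range fun j => ‖e'.repr x j‖) := by
    intro x; exact (Set.finite_range _).bddAbove
  have hA : ∀ x, (⨆ j, ‖e'.repr (fwd x) j‖) ≤ ⨆ j, ‖e'.repr x j‖ := by
    intro x
    have h1 : (⨆ j, ‖e'.repr (fwd x) j‖) = ⨆ j, ‖e'.repr x j + (e'.repr x 0) * e'.repr d j‖ := by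
      congr 1; ext j; rw [hfwd_apply, hrepr_add]
    rw [h1]
    exact sup_aux hk _ _ hwd _ (le_ciSup (hbddx x) 0)
  have hB : ∀ x, (⨆ j, ‖e'.repr (inv x) j‖) ≤ ⨆ j, ‖e'.repr x j‖ := by
    intro x
    have h1 : (⨆ j, ‖e'.repr (inv x) j‖)
        = ⨆ j, ‖e'.repr x j + (-(c⁻¹ * e'.repr x 0)) * e'.repr d j‖ := by
      congr 1; ext j
      rw [hinv_apply, sub_eq_add_neg, ← neg_smul, hrepr_add]
    rw [h1]
    refine sup_aux hk _ _ hwd _ ?_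
    have : ‖-(c⁻¹ * e'.repr x 0)‖ = ‖e'.repr x 0‖ := by
      rw [norm_neg, norm_mul, norm_inv, hc1]; simp
    rw [this]
    exact le_ciSup (hbddx x) 0
  have hinv_eq : ∀ x, (⨆ j, ‖e'.repr (inv x) j‖) = ⨆ j, ‖e'.repr x j‖ := by
    intro x
    refine le_antisymm (hB x) ?_
    have := hA (inv x)
    rw [show fwd (inv x) = x from hfi x] at this
    exact this
  -- final basis
  refine ⟨e'.map φ, ?_, ?_⟩
  · rw [Module.Basis.map_apply]
    have : φ (e' 0) = e' 0 + (e'.repr (e' 0) 0) • d := by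
      rw [hφ]; exact hfwd_apply (e' 0)
    rw [this, e'.repr_self]
    simp [hddef]
  · intro x
    rw [hNe' x]
    have hsymm : ∀ y, φ.symm y = inv y := by
      intro y; rw [hφ]; rfl
    have : ∀ j, (e'.map φ).repr x j = e'.repr (inv x) j := by
      intro j; rw [Module.Basis.map_repr, LinearEquiv.trans_apply, hsymm]
    simp only [this]
    exact (hinv_eq x).symm
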